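/- Let U, V be Hilbert spaces and B : U → V' a bounded linear operator such that c‖u‖_U ≤ ‖Bu‖_{V'} ≤ C‖u‖_U for all u ∈ U with constants 0 < c ≤ C. Let U_h ⊆ U be a closed subspace and let u ∈ U. If u_h ∈ U_h minimizes ‖B(w) - Bu‖_{V'} over w ∈ U_h, then ‖u - u_h‖_U ≤ (C/c) ‖u - w‖_U for every w ∈ U_h. -/
import Mathlib


/-- Quasi-optimality of minimum-residual (DPG) methods: if B : U → V' satisfies
c‖u‖ ≤ ‖Bu‖ ≤ C‖u‖ and u_h minimizes the residual ‖Bw - Bu‖ over a closed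
subspace U_h, then ‖u - u_h‖ ≤ (C/c)‖u - w‖ for all w ∈ U_h. -/
theorem stmt_7
    {U V : Type*} [NormedAddCommGroup U] [InnerProductSpace ℝ U] [CompleteSpace U]
    [NormedAddCommGroup V] [InnerProductSpace ℝ V] [CompleteSpace V]
    (B : U →L[ℝ] (V →L[ℝ] ℝ)) (c C : ℝ) (hc : 0 < c) (hcC : c ≤ C)
    (hlow : ∀ u : U, c * ‖u‖ ≤ ‖B u‖) (hup : ∀ u : U, ‖B u‖ ≤ C * ‖u‖)
    (Uh : Submodule ℝ U) (hUh : IsClosed (Uh : Set U))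
    (u u_h : U) (hmem : u_h ∈ Uh)
    (hmin : ∀ w ∈ Uh, ‖B u_h - B u‖ ≤ ‖B w - B u‖) :
    ∀ w ∈ Uh, ‖u - u_h‖ ≤ (C / c) * ‖u - w‖ := by
  intro w hw
  have h1 : c * ‖u - u_h‖ ≤ ‖B (u - u_h)‖ := hlow _
  have h2 : ‖B (u - u_h)‖ = ‖B u_h - B u‖ := by
    rw [map_sub, norm_sub_rev]
  have h3 : ‖B w - B u‖ = ‖B (u - w)‖ := by
    rw [norm_sub_rev, ← map_sub]
  have h4 : ‖B (u - w)‖ ≤ C * ‖u - w‖ := hup _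
  have := (h1.trans (h2 ▸ (hmin w hw).trans (h3 ▸ h4)))
  rw [div_mul_eq_mul_div, le_div_iff₀ hc, mul_comm]
  linarith
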